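/- The orthogonal group O(N) admits the factorization O(N) = T Σ₄ Γ: every φ ∈ O(N) can be written as φ = σ β τ with σ ∈ T, β ∈ Σ₄ and τ ∈ Γ. -/

import Mathlib

open LaurentPolynomial

/-- `A = ℤ[z, z⁻¹]`, the Laurent polynomial ring over the integers. -/
abbrev A : Type := LaurentPolynomial ℤ

/-- The conjugation `f(z) ↦ f(z⁻¹)` on `A`. -/
noncomputable def conj : A →+* A := (LaurentPolynomial.invert (R := ℤ)).toRingEquiv.toRingHom

/-- The fixed subring `A₀ = {f ∈ A | f* = f}`. -/
noncomputable def A0 : Subring A := RingHom.eqLocus conj (RingHom.id A)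

/-- `E = A⁴`. -/
abbrev E : Type := Fin 4 → A

/-- The norm `N(x) = ∑ₖ xₖ xₖ*`. -/
noncomputable def N (x : E) : A := ∑ k, x k * conj (x k)

/-- The standard `A`-basis vectors of `E = A⁴`. -/
noncomputable def e (k : Fin 4) : E := Pi.single k 1

/-- Yang's multiplication `x ∘ y = (p, q, r, s)`. -/
noncomputable def yang (x y : E) : E :=
  ![x 0 * y 0 - x 1 * conj (y 1) - x 2 * conj (y 2) - x 3 * conj (y 3),
    x 0 * y 1 + x 1 * conj (y 0) + conj (x 2) * conj (y 3) - conj (x 3) * conj (y 2),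
    x 0 * y 2 - conj (x 1) * conj (y 3) + x 2 * conj (y 0) + conj (x 3) * conj (y 1),
    x 0 * y 3 + conj (x 1) * conj (y 2) - conj (x 2) * conj (y 1) + x 3 * conj (y 0)]

/-! ### Auxiliary lemmas -/

lemma my_conj_apply (f : A) (n : ℤ) : (conj f).coeff n = f.coeff (-n) := invert_apply f n
lemma my_conj_T (n : ℤ) : conj (T n) = T (-n) := invert_T n
lemma my_conj_C (s : ℤ) : conj (C s) = C s := invert_C s

lemma my_CT_apply (r n m : ℤ) : (C r * T n : A).coeff m = if n = m then r else 0 := by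
  rw [← single_eq_C_mul_T]
  exact Finsupp.single_apply

lemma my_t_ne_zero : (T 1 + T (-1) : A) ≠ 0 := by
  intro h
  have h1 := congrArg (fun f : A => f.coeff 1) h
  have h2 : ((T 1 + T (-1) : A)).coeff 1 = (0:A).coeff 1 := h1
  rw [AddMonoidAlgebra.coeff_add, Finsupp.add_apply, T_apply, T_apply, AddMonoidAlgebra.coeff_zero,
    Finsupp.coe_zero, Pi.zero_apply] at h2
  norm_num at h2

lemma my_t_mem_A0 : (T 1 + T (-1) : A) ∈ A0 := by
  show conj _ = _
  simp only [map_add, my_conj_T, neg_neg, RingHom.id_apply]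
  ring

lemma my_mul_conj_coeff_zero (f : A) : (f * conj f).coeff 0 = ∑ a ∈ f.coeff.support, (f.coeff a)^2 := by
  rw [AddMonoidAlgebra.coeff_mul, Finsupp.sum]
  refine Finset.sum_congr rfl fun a ha => ?_
  rw [Finsupp.sum]
  have h1 : ∀ c : ℤ, (a + c = 0) ↔ (c = -a) := by intro c; omega
  have h2 : (-a) ∈ (conj f).coeff.support := by
    rw [Finsupp.mem_support_iff, my_conj_apply, neg_neg]
    exact Finsupp.mem_support_iff.mp ha
  calc (∑ c ∈ (conj f).coeff.support, if a + c = 0 then f.coeff a * (conj f).coeff c else 0)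
      = ∑ c ∈ (conj f).coeff.support, if c = -a then f.coeff a * (conj f).coeff c else 0 := by
        refine Finset.sum_congr rfl fun c _ => by simp only [h1]
    _ = f.coeff a * (conj f).coeff (-a) := by
        rw [Finset.sum_ite_eq' _ _ (fun c => f.coeff a * (conj f).coeff c), if_pos h2]
    _ = (f.coeff a)^2 := by rw [my_conj_apply, neg_neg, sq]

/-- Monomial units `± T^n`. -/
def IsMon (v : A) : Prop := ∃ s n : ℤ, (s = 1 ∨ s = -1) ∧ v = C s * T n

lemma IsMon.my_mul_conj {v : A} (h : IsMon v) : v * conj v = 1 := by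
  obtain ⟨s, n, hs, rfl⟩ := h
  rw [map_mul, my_conj_C, my_conj_T]
  have h2 : (C s * T n) * (C s * T (-n)) = C (s*s) * T (n + -n) := by
    rw [map_mul, T_add]; ring
  rw [h2]
  have hss : s * s = 1 := by rcases hs with h|h <;> simp [h]
  simp [hss]

lemma my_mon_mul_conj (s s' a b : ℤ) :
    (C s * T a) * conj (C s' * T b) = C (s * s') * T (a - b) := by
  have h : conj (C s' * T b) = C s' * T (-b) := by rw [map_mul, my_conj_C, my_conj_T]
  rw [h, map_mul C s s', T_sub]
  ring

lemma my_sum_sq_one {ι : Type*} [DecidableEq ι] (s : Finset ι) (g : ι → ℤ)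
    (h0 : ∀ i ∈ s, 0 ≤ g i) (h : ∑ i ∈ s, g i = 1) :
    ∃ i ∈ s, g i = 1 ∧ ∀ j ∈ s, j ≠ i → g j = 0 := by
  by_cases hpos : ∃ i ∈ s, 0 < g i
  · obtain ⟨i, hi, hgi⟩ := hpos
    have hins : ∑ j ∈ s.erase i, g j = 1 - g i := by
      rw [← h, Finset.sum_erase_eq_sub hi]
    have herased : 0 ≤ ∑ j ∈ s.erase i, g j :=
      Finset.sum_nonneg fun j hj => h0 j (Finset.mem_of_mem_erase hj)
    have hgi1 : g i = 1 := by omega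
    refine ⟨i, hi, hgi1, fun j hj hji => ?_⟩
    exact (Finset.sum_eq_zero_iff_of_nonneg
      (fun j hj => h0 j (Finset.mem_of_mem_erase hj))).mp (by omega) j
      (Finset.mem_erase.mpr ⟨hji, hj⟩)
  · push_neg at hpos
    have : ∑ i ∈ s, g i ≤ 0 := Finset.sum_nonpos hpos
    omega

lemma my_N_apply_zero (x : E) : (N x).coeff 0 = ∑ k : Fin 4, ∑ a ∈ (x k).coeff.support, ((x k).coeff a)^2 := by
  have h : (N x).coeff 0 = ∑ k : Fin 4, (x k * conj (x k)).coeff 0 := by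
    rw [N, AddMonoidAlgebra.coeff_sum, Finsupp.finset_sum_apply]
  rw [h]
  exact Finset.sum_congr rfl fun k _ => my_mul_conj_coeff_zero _

lemma my_norm_one {x : E} (h : N x = 1) : ∃ (k : Fin 4) (v : A), IsMon v ∧ x = (Pi.single k v : E) := by
  have hc : ∑ k : Fin 4, ∑ a ∈ (x k).coeff.support, ((x k).coeff a)^2 = 1 := by
    rw [← my_N_apply_zero, h]
    rw [AddMonoidAlgebra.one_def]; exact Finsupp.single_eq_same
  obtain ⟨k, -, hk1, hk0⟩ := my_sum_sq_one Finset.univ _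
    (fun i _ => Finset.sum_nonneg fun a _ => sq_nonneg _) hc
  obtain ⟨a, ha, ha1, ha0⟩ := my_sum_sq_one _ _ (fun a _ => sq_nonneg _) hk1
  have hsupp : (x k).coeff.support ⊆ {a} := by
    intro b hb
    rcases eq_or_ne b a with rfl | hba
    · exact Finset.mem_singleton_self _
    · exact absurd (pow_eq_zero_iff (n := 2) (by norm_num) |>.mp (ha0 b hb hba))
        (Finsupp.mem_support_iff.mp hb)
  have hxk : x k = AddMonoidAlgebra.single a ((x k).coeff a) :=
    AddMonoidAlgebra.coeff_injective (Finsupp.support_subset_singleton.mp hsupp)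
  have hs : (x k).coeff a = 1 ∨ (x k).coeff a = -1 := by
    have hsq : (x k).coeff a * (x k).coeff a = 1 := by rw [← sq]; exact ha1
    exact Int.isUnit_iff.mp (IsUnit.of_mul_eq_one _ hsq)
  refine ⟨k, C ((x k).coeff a) * T a, ⟨(x k).coeff a, a, hs, rfl⟩, ?_⟩
  funext j
  rcases eq_or_ne j k with rfl | hjk
  · rw [Pi.single_eq_same, ← single_eq_C_mul_T, ← hxk]
  · rw [Pi.single_eq_of_ne hjk]
    have hz0 : ∑ b ∈ (x j).coeff.support, ((x j).coeff b)^2 = 0 := hk0 j (Finset.mem_univ j) hjk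
    have hz := (Finset.sum_eq_zero_iff_of_nonneg (fun b _ => sq_nonneg _)).mp hz0
    ext b
    rcases eq_or_ne ((x j).coeff b) 0 with hb | hb
    · simp [hb]
    · exact absurd (pow_eq_zero_iff (n:=2) (by norm_num) |>.mp
        (hz b (Finsupp.mem_support_iff.mpr hb))) hb

lemma my_N_single (v : A) (m : Fin 4) : N (Pi.single m v : E) = v * conj v := by
  rw [N, Finset.sum_eq_single m]
  · rw [Pi.single_eq_same]
  · intro k _ hk; rw [Pi.single_eq_of_ne hk, zero_mul]
  · intro h; exact absurd (Finset.mem_univ m) h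

lemma my_N_two (a b : A) (i j : Fin 4) (h : i ≠ j) :
    N (Pi.single i a + Pi.single j b : E) = a * conj a + b * conj b := by
  have hterm : ∀ k, ((Pi.single i a + Pi.single j b : E) k)
        * conj ((Pi.single i a + Pi.single j b : E) k)
      = (if k = i then a * conj a else 0) + (if k = j then b * conj b else 0) := by
    intro k
    rcases eq_or_ne k i with rfl | hki
    · rw [if_pos rfl, if_neg h]
      simp [Pi.single_eq_same, Pi.single_eq_of_ne h]
    · rcases eq_or_ne k j with rfl | hkj
      · rw [if_neg hki, if_pos rfl]
        simp [Pi.single_eq_same, Pi.single_eq_of_ne hki]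
      · rw [if_neg hki, if_neg hkj]
        simp [Pi.single_eq_of_ne hki, Pi.single_eq_of_ne hkj]
  rw [N]
  rw [Finset.sum_congr rfl fun k _ => hterm k, Finset.sum_add_distrib,
    Finset.sum_ite_eq' _ _ (fun _ => a * conj a), Finset.sum_ite_eq' _ _ (fun _ => b * conj b)]
  simp

lemma my_mon_rel_core {s s' a b : ℤ} (hs : s = 1 ∨ s = -1) (hs' : s' = 1 ∨ s' = -1)
    (h : (C (s*s') * T (a-b) : A) + C (s'*s) * T (b-a) = (T 1 + T (-1) : A)) :
    (s' = s ∧ b = a + 1) ∨ (s' = s ∧ b = a - 1) := by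
  have h1 : (C (s*s') * T (a-b) + C (s'*s) * T (b-a) : A).coeff 1 = (T 1 + T (-1) : A).coeff 1 :=
    congrArg (fun f : A => f.coeff 1) h
  have h2 : (C (s*s') * T (a-b) + C (s'*s) * T (b-a) : A).coeff (-1) = (T 1 + T (-1) : A).coeff (-1) :=
    congrArg (fun f : A => f.coeff (-1)) h
  rw [AddMonoidAlgebra.coeff_add, Finsupp.add_apply, my_CT_apply, my_CT_apply,
    AddMonoidAlgebra.coeff_add, Finsupp.add_apply, T_apply, T_apply] at h1
  rw [AddMonoidAlgebra.coeff_add, Finsupp.add_apply, my_CT_apply, my_CT_apply,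
    AddMonoidAlgebra.coeff_add, Finsupp.add_apply, T_apply, T_apply] at h2
  rcases hs with rfl|rfl <;> rcases hs' with rfl|rfl <;>
    simp only [one_mul, mul_one, neg_mul, mul_neg, neg_neg] at h1 h2 <;>
    split_ifs at h1 h2 <;> omega

lemma my_mon_rel {v w : A} (hv : IsMon v) (hw : IsMon w)
    (h : v * conj w + w * conj v = T 1 + T (-1)) : w = v * T 1 ∨ w = v * T (-1) := by
  obtain ⟨s, a, hs, rfl⟩ := hv
  obtain ⟨s', b, hs', rfl⟩ := hw
  rw [my_mon_mul_conj, my_mon_mul_conj] at h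
  rcases my_mon_rel_core hs hs' h with ⟨rfl, rfl⟩ | ⟨rfl, rfl⟩
  · left; rw [mul_T_assoc]
  · right; rw [mul_T_assoc, ← sub_eq_add_neg]

lemma my_mon_nonzero {v w : A} (hv : IsMon v) (hw : IsMon w) :
    v * conj w + w * conj v ≠ 0 := by
  obtain ⟨s, a, hs, rfl⟩ := hv
  obtain ⟨s', b, hs', rfl⟩ := hw
  rw [my_mon_mul_conj, my_mon_mul_conj]
  intro h
  have h1 : (C (s*s') * T (a-b) + C (s'*s) * T (b-a) : A).coeff (a-b) = (0 : A).coeff (a-b) :=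
    congrArg (fun f : A => f.coeff (a-b)) h
  rw [AddMonoidAlgebra.coeff_add, Finsupp.add_apply, my_CT_apply, my_CT_apply,
    AddMonoidAlgebra.coeff_zero, Finsupp.coe_zero, Pi.zero_apply] at h1
  rcases hs with rfl|rfl <;> rcases hs' with rfl|rfl <;>
    simp only [one_mul, mul_one, neg_mul, mul_neg, neg_neg] at h1 <;>
    split_ifs at h1 <;> omega

lemma my_smul_single (c : A0) (v : A) (k : Fin 4) :
    c • (Pi.single k v : E) = Pi.single k ((c:A) * v) := by
  funext j
  show (c : A) * (Pi.single k v : E) j = _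
  rcases eq_or_ne j k with rfl | h
  · rw [Pi.single_eq_same, Pi.single_eq_same]
  · rw [Pi.single_eq_of_ne h, Pi.single_eq_of_ne h, mul_zero]

lemma my_span_A0 (f : A) : f ∈ Submodule.span A0 ({1, T 1} : Set A) := by
  set M := Submodule.span A0 ({1, T 1} : Set A) with hM
  have h1 : (1:A) ∈ M := Submodule.subset_span (Set.mem_insert _ _)
  have hT1 : (T 1 : A) ∈ M := Submodule.subset_span (Set.mem_insert_of_mem _ rfl)
  have htm : ∀ g : A, g ∈ M → (T 1 + T (-1)) * g ∈ M := by
    intro g hg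
    exact M.smul_mem (⟨T 1 + T (-1), my_t_mem_A0⟩ : A0) hg
  have key : ∀ n : ℤ, T n ∈ M ∧ T (n+1) ∈ M := by
    intro n
    induction n using Int.induction_on with
    | zero => exact ⟨by rw [T_zero]; exact h1, by norm_num; exact hT1⟩
    | succ n ih =>
      refine ⟨ih.2, ?_⟩
      have hrec : (T ((n:ℤ)+1+1) : A) = (T 1 + T (-1)) * T (n+1) - T n := by
        rw [add_mul, ← T_add, ← T_add]
        ring_nf
      rw [hrec]
      exact M.sub_mem (htm _ ih.2) ih.1
    | pred n ih =>
      have hrec : (T (-(n:ℤ)-1) : A) = (T 1 + T (-1)) * T (-n) - T (-n+1) := by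
        rw [add_mul, ← T_add, ← T_add]
        ring_nf
      have hmem := M.sub_mem (htm _ ih.1) ih.2
      rw [← hrec] at hmem
      refine ⟨hmem, ?_⟩
      have hx : (-(n:ℤ)-1+1) = -(n:ℤ) := by ring
      rw [hx]
      exact ih.1
  have hf : f = ∑ n ∈ f.coeff.support, AddMonoidAlgebra.single n (f.coeff n) := by
    conv_lhs => rw [← AddMonoidAlgebra.sum_coeff_single f]
    rfl
  rw [hf]
  refine M.sum_mem fun n _ => ?_
  have hC : C (f.coeff n) ∈ A0 := by show conj _ = _; rw [my_conj_C]; rfl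
  have hsingle : (AddMonoidAlgebra.single n (f.coeff n) : A) = (⟨C (f.coeff n), hC⟩ : A0) • T n := by
    show _ = C (f.coeff n) * T n
    rw [single_eq_C_mul_T]
  rw [hsingle]
  exact M.smul_mem _ (key n).1

/-- The factorization `O(N) = T Σ₄ Γ`: every `A₀`-linear bijection `φ` of `E`
preserving `N` is of the form `φ = σᵤ ∘ β ∘ τ` where `σᵤ ∈ T` multiplies the
coordinates by units `uₖ ∈ U₁`, `β ∈ Σ₄` permutes the coordinates, and `τ ∈ Γ`
conjugates some of the coordinates. -/
theorem O_N_factorization (φ : E ≃ₗ[A0] E) (hφ : ∀ x : E, N (φ x) = N x) :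
    ∃ u : Fin 4 → A, (∀ k, u k * conj (u k) = 1) ∧
      ∃ (p : Equiv.Perm (Fin 4)) (ε : Fin 4 → Bool),
        ∀ (x : E) (k : Fin 4),
          φ x k = u k * (if ε (p k) then conj (x (p k)) else x (p k)) := by
  have hconjt : conj (T 1 + T (-1) : A) = T 1 + T (-1) := my_t_mem_A0
  set t0 : A0 := ⟨T 1 + T (-1), my_t_mem_A0⟩ with ht0
  -- Step 1: φ(eₖ) and φ(z·eₖ) are monomial multiples of a common basis vector
  have key : ∀ k : Fin 4, ∃ (jk : Fin 4) (v : A) (bk : Bool), IsMon v ∧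
      φ (Pi.single k 1) = (Pi.single jk v : E) ∧
      φ (Pi.single k (T 1)) = (Pi.single jk (v * T (if bk then -1 else 1)) : E) := by
    intro k
    obtain ⟨j1, v, hv, hv1⟩ := my_norm_one (x := φ (Pi.single k 1))
      (by rw [hφ, my_N_single, map_one, mul_one])
    obtain ⟨j2, w, hw, hw1⟩ := my_norm_one (x := φ (Pi.single k (T 1)))
      (by rw [hφ, my_N_single, my_conj_T, ← T_add]; norm_num)
    have h3 : φ (Pi.single k (T (-1))) =
        (Pi.single j1 ((T 1 + T (-1)) * v) : E) - (Pi.single j2 w : E) := by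
      have harg : (Pi.single k (T (-1)) : E) = t0 • (Pi.single k 1 : E) - Pi.single k (T 1) := by
        rw [my_smul_single, ← Pi.single_sub]
        have hval : (t0 : A) * 1 - T 1 = T (-1) := by
          show (T 1 + T (-1)) * 1 - T 1 = T (-1)
          rw [mul_one]; ring
        rw [hval]
      rw [harg, map_sub, map_smul, hv1, hw1, my_smul_single]
    have hn3 : N (φ (Pi.single k (T (-1)))) = 1 := by
      rw [hφ, my_N_single, my_conj_T, neg_neg, ← T_add]; norm_num
    rcases eq_or_ne j2 j1 with rfl | hne
    · rw [h3, ← Pi.single_sub, my_N_single] at hn3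
      have hexp : ((T 1 + T (-1)) * v - w) * conj ((T 1 + T (-1)) * v - w)
          = (T 1 + T (-1)) * (T 1 + T (-1)) * (v * conj v) + w * conj w
            - (T 1 + T (-1)) * (v * conj w + w * conj v) := by
        rw [map_sub, map_mul, hconjt]; ring
      rw [hexp, hv.my_mul_conj, hw.my_mul_conj] at hn3
      have h0 : (T 1 + T (-1)) * ((T 1 + T (-1)) - (v * conj w + w * conj v)) = 0 := by
        linear_combination hn3
      have hX : v * conj w + w * conj v = T 1 + T (-1) := by
        rcases mul_eq_zero.mp h0 with h|h
        · exact absurd h my_t_ne_zero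
        · exact (sub_eq_zero.mp h).symm
      rcases my_mon_rel hv hw hX with h|h
      · exact ⟨j2, v, false, hv, hv1, by rw [hw1, h]; simp⟩
      · exact ⟨j2, v, true, hv, hv1, by rw [hw1, h]; simp⟩
    · exfalso
      rw [h3, sub_eq_add_neg, ← Pi.single_neg,
        my_N_two _ _ _ _ (fun hh => hne hh.symm)] at hn3
      have h1 : ((T 1 + T (-1)) * v) * conj ((T 1 + T (-1)) * v)
          = (T 1 + T (-1)) * (T 1 + T (-1)) * (v * conj v) := by
        rw [map_mul, hconjt]; ring
      have h2 : (-w) * conj (-w) = w * conj w := by rw [map_neg]; ring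
      rw [h1, h2, hv.my_mul_conj, hw.my_mul_conj, mul_one] at hn3
      have hz : (T 1 + T (-1) : A) * (T 1 + T (-1)) = 0 := by linear_combination hn3
      exact my_t_ne_zero (mul_self_eq_zero.mp hz)
  choose jf vf bf hmon hg1 hg2 using key
  -- Step 2: jf is injective
  have hinj : Function.Injective jf := by
    intro k l hkl
    by_contra hne
    have hNkl : N (Pi.single k 1 + Pi.single l 1 : E) = 2 := by
      rw [my_N_two _ _ _ _ hne, map_one, mul_one]
      norm_num
    have hN2 := hφ (Pi.single k 1 + Pi.single l 1)
    rw [map_add, hg1 k, hg1 l, hkl, ← Pi.single_add, my_N_single, hNkl] at hN2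
    have e1 : (vf k + vf l) * conj (vf k + vf l)
        = vf k * conj (vf k) + vf l * conj (vf l)
          + (vf k * conj (vf l) + vf l * conj (vf k)) := by
      rw [map_add]; ring
    rw [e1, (hmon k).my_mul_conj, (hmon l).my_mul_conj] at hN2
    exact my_mon_nonzero (hmon k) (hmon l) (by linear_combination hN2)
  have hbij : Function.Bijective jf := Finite.injective_iff_bijective.mp hinj
  set q := Equiv.ofBijective jf hbij with hq
  refine ⟨fun k => vf (q.symm k), fun k => (hmon _).my_mul_conj, q.symm, bf, ?_⟩
  -- Step 3: verify the formula on a spanning set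
  set S : Set E := {y | ∃ m : Fin 4, y = Pi.single m 1 ∨ y = Pi.single m (T 1)} with hS
  have hjq : ∀ m : Fin 4, q.symm (jf m) = m := fun m => q.symm_apply_apply m
  have hqj : ∀ k : Fin 4, jf (q.symm k) = k := fun k => q.apply_symm_apply k
  -- conjugation helpers
  have hite_mul : ∀ (b : Bool) (c : A0) (g : A),
      (if b then conj ((c:A) * g) else (c:A) * g) = (c:A) * (if b then conj g else g) := by
    intro b c g
    cases b
    · simp
    · have hc : conj (c : A) = (c : A) := c.2
      simp [map_mul, hc]
  have hite_add : ∀ (b : Bool) (g h : A),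
      (if b then conj (g + h) else g + h)
        = (if b then conj g else g) + (if b then conj h else h) := by
    intro b g h
    cases b
    · simp
    · simp [map_add]
  -- the property holds on generators
  have base : ∀ y ∈ S, ∀ k : Fin 4,
      φ y k = vf (q.symm k) *
        (if bf (q.symm k) then conj (y (q.symm k)) else y (q.symm k)) := by
    rintro y ⟨m, hy | hy⟩ k <;> subst hy <;>
      rcases eq_or_ne k (jf m) with rfl | hk
    · rw [hg1 m, Pi.single_eq_same, hjq m, Pi.single_eq_same]
      cases hbm : bf m <;> simp
    · have hqm : q.symm k ≠ m := fun hcon => hk (hcon ▸ (hqj k)).symm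
      rw [hg1 m, Pi.single_eq_of_ne hk, Pi.single_eq_of_ne hqm]
      cases hbm : bf (q.symm k) <;> simp
    · rw [hg2 m, Pi.single_eq_same, hjq m, Pi.single_eq_same]
      cases hbm : bf m <;> simp [my_conj_T]
    · have hqm : q.symm k ≠ m := fun hcon => hk (hcon ▸ (hqj k)).symm
      rw [hg2 m, Pi.single_eq_of_ne hk, Pi.single_eq_of_ne hqm]
      cases hbm : bf (q.symm k) <;> simp
  -- every element of E lies in the A0-span of S
  have haux : ∀ (m : Fin 4) (g : A), g ∈ Submodule.span A0 ({1, T 1} : Set A) →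
      (Pi.single m g : E) ∈ Submodule.span A0 S := by
    intro m g hg
    induction hg using Submodule.span_induction with
    | mem g hgmem =>
      rcases hgmem with rfl | hgm
      · exact Submodule.subset_span ⟨m, Or.inl rfl⟩
      · rw [Set.mem_singleton_iff.mp hgm]
        exact Submodule.subset_span ⟨m, Or.inr rfl⟩
    | zero =>
      rw [Pi.single_zero]
      exact Submodule.zero_mem _
    | add g h _ _ ihg ihh =>
      rw [Pi.single_add]
      exact Submodule.add_mem _ ihg ihh
    | smul c g _ ihg =>
      have hsm : (Pi.single m (c • g) : E) = c • (Pi.single m g : E) := by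
        rw [my_smul_single]; rfl
      rw [hsm]
      exact Submodule.smul_mem _ _ ihg
  have hspanE : ∀ x : E, x ∈ Submodule.span A0 S := by
    intro x
    have hx : x = ∑ m, Pi.single m (x m) := (Finset.univ_sum_single x).symm
    rw [hx]
    exact Submodule.sum_mem _ fun m _ => haux m (x m) (my_span_A0 (x m))
  -- conclude by span induction
  have final : ∀ y : E, y ∈ Submodule.span A0 S → ∀ k : Fin 4,
      φ y k = vf (q.symm k) *
        (if bf (q.symm k) then conj (y (q.symm k)) else y (q.symm k)) := by
    intro y hy
    induction hy using Submodule.span_induction with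
    | mem y hymem => exact base y hymem
    | zero =>
      intro k
      rw [map_zero]
      simp
    | add y z _ _ ihy ihz =>
      intro k
      rw [map_add]
      have h1 := ihy k
      have h2 := ihz k
      show φ y k + φ z k = _
      rw [h1, h2, ← mul_add]
      congr 1
      show _ = if bf (q.symm k) then conj ((y + z) (q.symm k)) else (y + z) (q.symm k)
      rw [show (y + z) (q.symm k) = y (q.symm k) + z (q.symm k) from rfl, hite_add]
    | smul c y _ ihy =>
      intro k
      rw [map_smul]
      have h1 := ihy k
      have happ2 : (c • φ y) k = (c:A) * φ y k := rfl
      have happ : (c • y : E) (q.symm k) = (c:A) * y (q.symm k) := rfl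
      rw [happ2, happ, hite_mul, h1]
      ring
  exact fun x => final x (hspanE x)
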